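/- Define polynomials Ẽ_s by Ẽ₁(β) = (1/24)β(7β² - 6), Ẽ₂(β) = (1/16)(1-β²)²(2-7β²), and for s ≥ 2, Ẽ_{s+1}(β) = -(1/2)(1-β²)² Ẽ_s'(β) - (1/2)∫_{σ(s)}^{β}(1-p²)² Σ_{j=1}^{s-1} Ẽ_j'(p)Ẽ_{s-j}'(p) dp with σ(s)=1 for s odd and 0 for s even. Then Ẽ_{2s} is even, Ẽ_{2s+1} is odd, and Ẽ_{2s}(±1) = 0 for all s ≥ 1. -/

import Mathlib

open intervalIntegral

noncomputable def sigmaLG (s : ℕ) : ℝ := if Odd s then 1 else 0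

noncomputable def EtCoef : ℕ → ℝ → ℝ
  | 0 => fun _ => 0
  | 1 => fun β => β * (7 * β ^ 2 - 6) / 24
  | 2 => fun β => (1 - β ^ 2) ^ 2 * (2 - 7 * β ^ 2) / 16
  | (n + 3) => fun β =>
      -((1 - β ^ 2) ^ 2 * deriv (EtCoef (n + 2)) β / 2)
      - (∫ p in sigmaLG (n + 2)..β, (1 - p ^ 2) ^ 2 *
          ∑ j ∈ (Finset.Icc 1 (n + 1)).attach,
            deriv (EtCoef j.1) p * deriv (EtCoef (n + 2 - j.1)) p) / 2
  decreasing_by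
  · omega
  · have := (Finset.mem_Icc.mp j.2).2; omega
  · have := (Finset.mem_Icc.mp j.2).1; omega

lemma exists_antideriv (R : Polynomial ℝ) : ∃ P : Polynomial ℝ, P.derivative = R := by
  induction R using Polynomial.induction_on' with
  | add p q hp hq =>
    obtain ⟨P, hP⟩ := hp; obtain ⟨Q, hQ⟩ := hq
    exact ⟨P + Q, by simp [hP, hQ]⟩
  | monomial n a =>
    refine ⟨Polynomial.C (a / (n + 1)) * Polynomial.X ^ (n + 1), ?_⟩
    rw [Polynomial.derivative_C_mul, Polynomial.derivative_X_pow]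
    rw [← Polynomial.C_mul_X_pow_eq_monomial, ← mul_assoc, ← Polynomial.C_mul]
    congr 2
    field_simp
    push_cast; ring

lemma deriv_parity {f : ℝ → ℝ} {n : ℕ} (h : ∀ x, f (-x) = (-1) ^ n * f x) (x : ℝ) :
    deriv f (-x) = (-1) ^ (n + 1) * deriv f x := by
  have h1 : (fun y => f (-y)) = fun y => (-1 : ℝ) ^ n * f y := funext h
  have h2 : deriv (fun y => f (-y)) x = -deriv f (-x) := deriv_comp_neg f x
  rw [h1, deriv_const_mul_field] at h2
  rw [pow_succ]
  linarith

lemma int_from_zero {g : ℝ → ℝ} {ε : ℝ} (h : ∀ x, g (-x) = ε * g x) (β : ℝ) :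
    ∫ p in (0:ℝ)..(-β), g p = -ε * ∫ p in (0:ℝ)..β, g p := by
  have h1 : ∫ x in (0:ℝ)..β, g (-x) = ∫ x in (-β)..(-(0:ℝ)), g x := integral_comp_neg g
  simp only [neg_zero] at h1
  have h2 : ∫ x in (0:ℝ)..β, g (-x) = ε * ∫ x in (0:ℝ)..β, g x := by
    simp_rw [h]; exact intervalIntegral.integral_const_mul ε g
  rw [h2] at h1
  have h3 : ∫ x in (-β)..(0:ℝ), g x = -∫ x in (0:ℝ)..(-β), g x :=
    intervalIntegral.integral_symm 0 (-β)
  rw [h3] at h1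
  linarith

lemma int_from_one {g : ℝ → ℝ} (hc : Continuous g) (h : ∀ x, g (-x) = -g x) (β : ℝ) :
    ∫ p in (1:ℝ)..(-β), g p = ∫ p in (1:ℝ)..β, g p := by
  have hsym : ∫ p in β..(-β), g p = 0 := by
    have h1 : ∫ x in β..(-β), g (-x) = ∫ x in (-(-β))..(-β), g x := integral_comp_neg g
    rw [neg_neg] at h1
    have h2 : ∫ x in β..(-β), g (-x) = -∫ x in β..(-β), g x := by
      simp_rw [h]; exact intervalIntegral.integral_neg
    rw [h2] at h1; linarith
  rw [← intervalIntegral.integral_add_adjacent_intervals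
    (hc.intervalIntegrable 1 β) (hc.intervalIntegrable β (-β)), hsym, add_zero]

lemma EtCoef_poly_parity (n : ℕ) :
    (∃ Q : Polynomial ℝ, ∀ x, EtCoef n x = Q.eval x) ∧
    (∀ x, EtCoef n (-x) = (-1) ^ n * EtCoef n x) := by
  induction n using Nat.strong_induction_on with
  | _ n ih =>
    match n, ih with
    | 0, _ => exact ⟨⟨0, fun x => by simp [EtCoef]⟩, fun x => by simp [EtCoef]⟩
    | 1, _ =>
      refine ⟨⟨Polynomial.C (1/24) * (Polynomial.X * (7 * Polynomial.X ^ 2 - 6)),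
        fun x => ?_⟩, fun x => ?_⟩
      · simp [EtCoef]; ring
      · simp only [EtCoef, pow_one]; ring
    | 2, _ =>
      refine ⟨⟨Polynomial.C (1/16) * ((1 - Polynomial.X ^ 2) ^ 2 * (2 - 7 * Polynomial.X ^ 2)),
        fun x => ?_⟩, fun x => ?_⟩
      · simp [EtCoef]; ring
      · simp only [EtCoef]; ring
    | (n + 3), ih =>
      have hQex : ∀ m, m < n + 3 → ∃ Q : Polynomial ℝ, ∀ x, EtCoef m x = Q.eval x :=
        fun m hm => (ih m hm).1
      choose Qf hQf using hQex
      have hderiv : ∀ m (hm : m < n + 3) (x : ℝ),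
          deriv (EtCoef m) x = (Qf m hm).derivative.eval x := by
        intro m hm x
        have he : EtCoef m = fun y => (Qf m hm).eval y := funext (hQf m hm)
        rw [he, Polynomial.deriv]
      -- the integrand is a polynomial
      obtain ⟨R, hg⟩ : ∃ R : Polynomial ℝ, ∀ p : ℝ,
          (1 - p ^ 2) ^ 2 * ∑ j ∈ (Finset.Icc 1 (n + 1)).attach,
            deriv (EtCoef j.1) p * deriv (EtCoef (n + 2 - j.1)) p = R.eval p := by
        refine ⟨(1 - Polynomial.X ^ 2) ^ 2 *
          ∑ j ∈ (Finset.Icc 1 (n + 1)).attach,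
            (Qf j.1 (by have := (Finset.mem_Icc.mp j.2).2; omega)).derivative *
            (Qf (n + 2 - j.1) (by have := (Finset.mem_Icc.mp j.2).1; omega)).derivative,
          fun p => ?_⟩
        simp only [Polynomial.eval_mul, Polynomial.eval_pow, Polynomial.eval_sub,
          Polynomial.eval_one, Polynomial.eval_finset_sum, Polynomial.eval_X]
        congr 1
        refine Finset.sum_congr rfl fun j _ => ?_
        rw [hderiv j.1 (by have := (Finset.mem_Icc.mp j.2).2; omega) p,
          hderiv (n + 2 - j.1) (by have := (Finset.mem_Icc.mp j.2).1; omega) p]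
      -- parity of the integrand
      have hgpar : ∀ p : ℝ, R.eval (-p) = (-1) ^ n * R.eval p := by
        intro p
        rw [← hg, ← hg]
        have hsq : ((1:ℝ) - (-p) ^ 2) ^ 2 = (1 - p ^ 2) ^ 2 := by ring
        have hsum : ∑ j ∈ (Finset.Icc 1 (n + 1)).attach,
            deriv (EtCoef j.1) (-p) * deriv (EtCoef (n + 2 - j.1)) (-p)
            = (-1) ^ n * ∑ j ∈ (Finset.Icc 1 (n + 1)).attach,
            deriv (EtCoef j.1) p * deriv (EtCoef (n + 2 - j.1)) p := by
          rw [Finset.mul_sum]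
          refine Finset.sum_congr rfl fun j _ => ?_
          have hj1 : j.1 < n + 3 := by have := (Finset.mem_Icc.mp j.2).2; omega
          have hj2 : n + 2 - j.1 < n + 3 := by have := (Finset.mem_Icc.mp j.2).1; omega
          rw [deriv_parity (ih j.1 hj1).2 p, deriv_parity (ih (n + 2 - j.1) hj2).2 p,
            mul_mul_mul_comm, ← pow_add]
          have hexp : j.1 + 1 + (n + 2 - j.1 + 1) = n + 4 := by
            have := Finset.mem_Icc.mp j.2; omega
          rw [hexp]
          have h4 : ((-1:ℝ)) ^ (n + 4) = (-1) ^ n := by rw [pow_add]; norm_num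
          rw [h4]
        rw [hsq, hsum]
        ring
      -- antiderivative and value of the integral
      obtain ⟨A, hA⟩ := exists_antideriv R
      have hint : ∀ a b : ℝ, (∫ p in a..b, R.eval p) = A.eval b - A.eval a := by
        intro a b
        refine intervalIntegral.integral_deriv_eq_sub' (fun x => A.eval x) ?_ ?_ ?_
        · funext x; rw [Polynomial.deriv, hA]
        · exact fun x _ => A.differentiableAt
        · exact R.continuous.continuousOn
      constructor
      · -- polynomial witness
        refine ⟨-(Polynomial.C (1/2) * (1 - Polynomial.X ^ 2) ^ 2 *
            (Qf (n + 2) (by omega)).derivative)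
          - Polynomial.C (1/2) * (A - Polynomial.C (A.eval (sigmaLG (n + 2)))), fun x => ?_⟩
        rw [EtCoef]
        simp_rw [hg]
        rw [hderiv (n + 2) (by omega) x, hint]
        simp only [Polynomial.eval_sub, Polynomial.eval_neg, Polynomial.eval_mul,
          Polynomial.eval_pow, Polynomial.eval_one, Polynomial.eval_C, Polynomial.eval_X]
        ring
      · -- parity
        intro x
        have hE : ∀ β : ℝ, EtCoef (n + 3) β =
            -((1 - β ^ 2) ^ 2 * deriv (EtCoef (n + 2)) β / 2)
            - (∫ p in sigmaLG (n + 2)..β, (1 - p ^ 2) ^ 2 *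
                ∑ j ∈ (Finset.Icc 1 (n + 1)).attach,
                  deriv (EtCoef j.1) p * deriv (EtCoef (n + 2 - j.1)) p) / 2 :=
          fun β => by rw [EtCoef]
        rw [hE, hE]
        simp_rw [hg]
        rw [deriv_parity (ih (n + 2) (by omega)).2 x]
        rcases Nat.even_or_odd n with he | ho
        · have hσ : sigmaLG (n + 2) = 0 := by
            have : ¬ Odd (n + 2) := by
              simp only [Nat.odd_iff] at *
              rcases he with ⟨k, hk⟩; omega
            simp [sigmaLG, this]
          rw [hσ, int_from_zero hgpar x, he.neg_one_pow]
          have h3 : ((-1:ℝ)) ^ (n + 2 + 1) = -1 := by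
            have : Odd (n + 2 + 1) := by rcases he with ⟨k, hk⟩; exact ⟨k + 1, by omega⟩
            exact this.neg_one_pow
          rw [h3]
          ring
        · have hσ : sigmaLG (n + 2) = 1 := by
            have : Odd (n + 2) := by rcases ho with ⟨k, hk⟩; exact ⟨k + 1, by omega⟩
            simp [sigmaLG, this]
          rw [hσ, int_from_one R.continuous
            (fun y => by rw [hgpar y, ho.neg_one_pow]; ring) x]
          have h3 : ((-1:ℝ)) ^ (n + 2 + 1) = 1 := by
            have : Even (n + 2 + 1) := by rcases ho with ⟨k, hk⟩; exact ⟨k + 2, by omega⟩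
            exact this.neg_one_pow
          rw [h3]
          ring

lemma EtCoef_even_one (s : ℕ) (hs : 1 ≤ s) : EtCoef (2 * s) 1 = 0 := by
  rcases Nat.lt_or_ge s 2 with h | h
  · interval_cases s
    norm_num [EtCoef]
  · obtain ⟨k, rfl⟩ : ∃ k, s = k + 2 := ⟨s - 2, by omega⟩
    have h2 : 2 * (k + 2) = (2 * k + 1) + 3 := by ring
    rw [h2, EtCoef]
    have hσ : sigmaLG (2 * k + 1 + 2) = 1 := by
      have : Odd (2 * k + 1 + 2) := ⟨k + 1, by ring⟩
      simp [sigmaLG, this]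
    rw [hσ]
    norm_num [intervalIntegral.integral_same]

/-- for every `s ≥ 1`, `Ẽ_{2s}` is even, `Ẽ_{2s+1}` is odd, and
`Ẽ_{2s}(±1) = 0`. -/
theorem EtCoef_parity_and_vanish (s : ℕ) (hs : 1 ≤ s) :
    (∀ β : ℝ, EtCoef (2 * s) (-β) = EtCoef (2 * s) β) ∧
    (∀ β : ℝ, EtCoef (2 * s + 1) (-β) = -EtCoef (2 * s + 1) β) ∧
    EtCoef (2 * s) 1 = 0 ∧ EtCoef (2 * s) (-1) = 0 := by
  have heven : ∀ β : ℝ, EtCoef (2 * s) (-β) = EtCoef (2 * s) β := by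
    intro β
    have h := (EtCoef_poly_parity (2 * s)).2 β
    rwa [(even_two_mul s).neg_one_pow, one_mul] at h
  have hodd : ∀ β : ℝ, EtCoef (2 * s + 1) (-β) = -EtCoef (2 * s + 1) β := by
    intro β
    have h := (EtCoef_poly_parity (2 * s + 1)).2 β
    rwa [(odd_two_mul_add_one s).neg_one_pow, neg_one_mul] at h
  have h1 := EtCoef_even_one s hs
  exact ⟨heven, hodd, h1, by rw [show (-1:ℝ) = -(1:ℝ) from rfl, heven 1, h1]⟩
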